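/- Real part of the undephased heat-absorbed variance: in the qubit Otto setup with ρ₂ = U ρ₁ U†, one has Tr[H₂ Φ(H₂ρ₂ + ρ₂H₂)] = 2ν₂²(1 − 2θ); consequently the real part of the second cumulant of the stochastic heat absorbed of the undephased engine is ⟨Q_M²⟩_c = 2ν₂² − Tr[H₂ Φ(H₂ρ₂ + ρ₂H₂)] − ⟨Q_M⟩² = 4θν₂² − ⟨Q_M⟩², where ⟨Q_M⟩ = 2(θ_c − δ′)ν₂ tanh(βν₁). -/

import Mathlib

open Matrix

private lemma mul_vmv (M : Matrix (Fin 2) (Fin 2) ℂ) (u v : Fin 2 → ℂ) :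
    M * vecMulVec u v = vecMulVec (M *ᵥ u) v := by
  ext i j
  simp only [mul_apply, vecMulVec_apply, mulVec, dotProduct, Finset.sum_mul]
  exact Finset.sum_congr rfl fun _ _ => by ring

private lemma vmv_mul_vmv (u v w x : Fin 2 → ℂ) :
    vecMulVec u v * vecMulVec w x = (v ⬝ᵥ w) • vecMulVec u x := by
  ext i j
  simp only [mul_apply, vecMulVec_apply, Matrix.smul_apply, dotProduct, smul_eq_mul,
    Finset.sum_mul]
  exact Finset.sum_congr rfl fun _ _ => by ring

private lemma trace_vmv (u v : Fin 2 → ℂ) : (vecMulVec u v).trace = u ⬝ᵥ v := by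
  simp [trace, diag, vecMulVec_apply, dotProduct]

private lemma trace_vmv_mul (u v : Fin 2 → ℂ) (M : Matrix (Fin 2) (Fin 2) ℂ) :
    (vecMulVec u v * M).trace = v ⬝ᵥ (M *ᵥ u) := by
  simp only [trace, diag_apply, mul_apply, vecMulVec_apply, dotProduct, mulVec,
    Finset.mul_sum]
  rw [Finset.sum_comm]
  exact Finset.sum_congr rfl fun _ _ => Finset.sum_congr rfl fun _ _ => by ring

private lemma complete_pair (u v : Fin 2 → ℂ) (hu : star u ⬝ᵥ u = 1)
    (hv : star v ⬝ᵥ v = 1) (huv : star u ⬝ᵥ v = 0) :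
    vecMulVec u (star u) + vecMulVec v (star v) = 1 := by
  have hvu : star v ⬝ᵥ u = 0 := by
    have := congrArg star huv
    simpa [dotProduct, star_sum, mul_comm] using this
  simp only [dotProduct, Fin.sum_univ_two, Pi.star_apply] at hu hv huv hvu
  have h1 : (Matrix.of fun (i j : Fin 2) => if j = 0 then u i else v i : Matrix (Fin 2) (Fin 2) ℂ)ᴴ *
      (Matrix.of fun (i j : Fin 2) => if j = 0 then u i else v i) = 1 := by
    ext i j
    fin_cases i <;> fin_cases j <;>
      simp_all [mul_apply, conjTranspose_apply, Fin.sum_univ_two, one_apply]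
  have h2 := mul_eq_one_comm.mp h1
  rw [← h2]
  ext i j
  simp [mul_apply, vecMulVec_apply, conjTranspose_apply, Fin.sum_univ_two, mul_comm]

/-- Real part of the undephased heat-absorbed variance: in the qubit Otto
setup with `ρ₂ = U ρ₁ Uᴴ`, one has `Tr[H₂ Φ(H₂ ρ₂ + ρ₂ H₂)] = 2ν₂² (1 − 2θ)`; consequently
the real part of the second cumulant of the stochastic heat absorbed of the undephased
engine is `⟨Q_M²⟩_c = 2ν₂² − Tr[H₂ Φ(H₂ ρ₂ + ρ₂ H₂)] − ⟨Q_M⟩² = 4θν₂² − ⟨Q_M⟩²`, where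
`⟨Q_M⟩ = 2 (θ_c − δ′) ν₂ tanh(βν₁)`. -/
theorem undephased_QM_variance_qubit
    (β ν₁ ν₂ : ℝ) (hβ : 0 < β) (hν₁ : 0 < ν₁) (hν₂ : 0 < ν₂)
    (ep em fp fm : Fin 2 → ℂ)
    (hep : star ep ⬝ᵥ ep = 1) (hem : star em ⬝ᵥ em = 1) (hepm : star ep ⬝ᵥ em = 0)
    (hfp : star fp ⬝ᵥ fp = 1) (hfm : star fm ⬝ᵥ fm = 1) (hfpm : star fp ⬝ᵥ fm = 0)
    (H₁ H₂ ρ₁ ρ₂ : Matrix (Fin 2) (Fin 2) ℂ)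
    (hH₁ : H₁ = (ν₁ : ℂ) • (vecMulVec ep (star ep) - vecMulVec em (star em)))
    (hH₂ : H₂ = (ν₂ : ℂ) • (vecMulVec fp (star fp) - vecMulVec fm (star fm)))
    (hρ₁ : ρ₁ = ((2 * Real.cosh (β * ν₁) : ℝ) : ℂ)⁻¹ •
        ((Real.exp (-(β * ν₁)) : ℂ) • vecMulVec ep (star ep) +
         (Real.exp (β * ν₁) : ℂ) • vecMulVec em (star em)))
    (U : Matrix (Fin 2) (Fin 2) ℂ)
    (hU : Uᴴ * U = 1) (hU' : U * Uᴴ = 1)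
    (hρ₂ : ρ₂ = U * ρ₁ * Uᴴ)
    {K : ℕ} (Kr : Fin K → Matrix (Fin 2) (Fin 2) ℂ)
    (hKr : ∑ k, (Kr k)ᴴ * Kr k = 1) (hKr' : ∑ k, Kr k * (Kr k)ᴴ = 1)
    (Φ : Matrix (Fin 2) (Fin 2) ℂ → Matrix (Fin 2) (Fin 2) ℂ)
    (hΦ : ∀ X, Φ X = ∑ k, Kr k * X * (Kr k)ᴴ)
    (δ' : ℝ) (hδ' : δ' = ‖star fp ⬝ᵥ (U *ᵥ em)‖ ^ 2)
    (θ : ℂ) (hθ : θ = star fm ⬝ᵥ (Φ (vecMulVec fp (star fp)) *ᵥ fm))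
    (θc : ℂ) (hθc : θc = star fm ⬝ᵥ (Φ (U * vecMulVec ep (star ep) * Uᴴ) *ᵥ fm))
    (QM : ℂ) (hQM : QM = 2 * (θc - (δ' : ℂ)) * (ν₂ : ℂ) * (Real.tanh (β * ν₁) : ℂ)) :
    (H₂ * Φ (H₂ * ρ₂ + ρ₂ * H₂)).trace = 2 * (ν₂ : ℂ) ^ 2 * (1 - 2 * θ) ∧
    2 * (ν₂ : ℂ) ^ 2 - (H₂ * Φ (H₂ * ρ₂ + ρ₂ * H₂)).trace - QM ^ 2 =
        4 * θ * (ν₂ : ℂ) ^ 2 - QM ^ 2 := by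
  set P := vecMulVec fp (star fp) with hP
  set Q := vecMulVec fm (star fm) with hQdef
  -- channel properties
  have hΦadd : ∀ A B, Φ (A + B) = Φ A + Φ B := by
    intro A B; simp [hΦ, mul_add, add_mul, Finset.sum_add_distrib]
  have hΦsub : ∀ A B, Φ (A - B) = Φ A - Φ B := by
    intro A B; simp [hΦ, mul_sub, sub_mul, Finset.sum_sub_distrib]
  have hΦsmul : ∀ (c : ℂ) A, Φ (c • A) = c • Φ A := by
    intro c A; simp [hΦ, Matrix.mul_smul, Matrix.smul_mul, Finset.smul_sum]
  have hΦ1 : Φ 1 = 1 := by simp [hΦ, hKr']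
  have hΦtr : ∀ A : Matrix (Fin 2) (Fin 2) ℂ, (Φ A).trace = A.trace := by
    intro A
    rw [hΦ, trace_sum]
    have : ∀ k, (Kr k * A * (Kr k)ᴴ).trace = ((Kr k)ᴴ * Kr k * A).trace := by
      intro k; rw [trace_mul_cycle]
    simp only [this]
    rw [← trace_sum, ← Finset.sum_mul, hKr, one_mul]
  -- completeness
  have hPQ : P + Q = 1 := complete_pair fp fm hfp hfm hfpm
  have hQ1 : Q = 1 - P := eq_sub_of_add_eq' hPQ
  set a := star fp ⬝ᵥ (ρ₂ *ᵥ fp) with ha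
  set b := star fm ⬝ᵥ (ρ₂ *ᵥ fm) with hb
  -- corner projections
  have hPρP : P * ρ₂ * P = a • P := by
    rw [hP, mul_assoc, mul_vmv, vmv_mul_vmv]
  have hQρQ : Q * ρ₂ * Q = b • Q := by
    rw [hQdef, mul_assoc, mul_vmv, vmv_mul_vmv]
  -- trace of ρ₂ is 1, so a + b = 1
  have hcosh : (2 * Real.cosh (β * ν₁) : ℝ) ≠ 0 := by
    positivity
  have htrρ₁ : ρ₁.trace = 1 := by
    rw [hρ₁, trace_smul, trace_add, trace_smul, trace_smul, trace_vmv, trace_vmv,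
      dotProduct_comm, hep, dotProduct_comm, hem]
    have hsumr : Real.exp (-(β * ν₁)) + Real.exp (β * ν₁) = 2 * Real.cosh (β * ν₁) := by
      rw [Real.cosh_eq]; ring
    have hsum : ((Real.exp (-(β * ν₁)) : ℂ) + (Real.exp (β * ν₁) : ℂ)) =
        ((2 * Real.cosh (β * ν₁) : ℝ) : ℂ) := by exact_mod_cast congrArg Complex.ofReal hsumr
    rw [smul_eq_mul, smul_eq_mul, smul_eq_mul, mul_one, mul_one, hsum]
    rw [inv_mul_cancel₀ (by exact_mod_cast hcosh)]
  have htrρ₂ : ρ₂.trace = 1 := by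
    rw [hρ₂, trace_mul_cycle, hU, one_mul, htrρ₁]
  have hab : a + b = 1 := by
    have h1 : (P * ρ₂).trace = a := by rw [hP, trace_vmv_mul]
    have h2 : (Q * ρ₂).trace = b := by rw [hQdef, trace_vmv_mul]
    calc a + b = (P * ρ₂).trace + (Q * ρ₂).trace := by rw [h1, h2]
      _ = ((P + Q) * ρ₂).trace := by rw [add_mul, trace_add]
      _ = 1 := by rw [hPQ, one_mul, htrρ₂]
  -- the key matrix identity
  have hkey : (P - Q) * ρ₂ + ρ₂ * (P - Q) =
      (P * ρ₂ * P - Q * ρ₂ * Q) + (P * ρ₂ * P - Q * ρ₂ * Q) := by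
    rw [hQ1]; noncomm_ring
  have hX : H₂ * ρ₂ + ρ₂ * H₂ = (ν₂ : ℂ) • ((a • P - b • Q) + (a • P - b • Q)) := by
    rw [hH₂, Matrix.smul_mul, Matrix.mul_smul, ← smul_add, hkey, hPρP, hQρQ]
  -- simplify Φ of the combination
  have hE : a • Φ P - b • Φ Q = Φ P - b • (1 : Matrix (Fin 2) (Fin 2) ℂ) := by
    have ha' : a = 1 - b := by linear_combination hab
    rw [hQ1, hΦsub, hΦ1, ha']
    module
  have hΦX : Φ (H₂ * ρ₂ + ρ₂ * H₂) =
      (ν₂ : ℂ) • ((Φ P - b • 1) + (Φ P - b • 1)) := by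
    rw [hX, hΦsmul, hΦadd, hΦsub, hΦsmul, hΦsmul, hE]
  -- trace facts
  have htrP : P.trace = 1 := by
    rw [hP, trace_vmv, dotProduct_comm, hfp]
  have htrΦP : (Φ P).trace = 1 := by rw [hΦtr, htrP]
  have hQΦP : (Q * Φ P).trace = θ := by
    rw [hQdef, trace_vmv_mul, hθ, hP]
  have hPΦP : (P * Φ P).trace = 1 - θ := by
    have : (P * Φ P).trace + (Q * Φ P).trace = 1 := by
      rw [← trace_add, ← add_mul, hPQ, one_mul, htrΦP]
    rw [hQΦP] at this
    linear_combination this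
  -- main trace computation
  have hmain : (H₂ * Φ (H₂ * ρ₂ + ρ₂ * H₂)).trace = 2 * (ν₂ : ℂ) ^ 2 * (1 - 2 * θ) := by
    rw [hΦX, hH₂]
    rw [Matrix.smul_mul, Matrix.mul_smul, smul_smul]
    rw [trace_smul]
    have hexp : ((P - Q) * ((Φ P - b • 1) + (Φ P - b • 1))).trace =
        ((P * Φ P).trace - (Q * Φ P).trace - b * P.trace + b * Q.trace) +
        ((P * Φ P).trace - (Q * Φ P).trace - b * P.trace + b * Q.trace) := by
      simp only [mul_add, sub_mul, mul_sub, Matrix.mul_smul, Matrix.mul_one,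
        trace_add, trace_sub, trace_smul, smul_eq_mul]
      ring
    have htrQ : Q.trace = 1 := by rw [hQdef, trace_vmv, dotProduct_comm, hfm]
    rw [hexp, hPΦP, hQΦP, htrP, htrQ]
    simp only [smul_eq_mul]
    ring
  refine ⟨hmain, ?_⟩
  rw [hmain]
  ring
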